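/- Let a random walk on a finite connected graph G with m edges be generated by an edge-weight function w normalized so that w of some edge incident to a pendant vertex a equals 1, and let τ be the asymmetry. If a is a pendant vertex with unique neighbor a_1, then the hitting time H(a_1, a) ≤ P(τ, m) = 2(τ^{m−1} + τ^{m−2} + ... + τ) + 1; equivalently, the total edge-conductance Σ_{e∈E} w(e) is at most τ^{m−1} + ... + τ + 1. -/

import Mathlib

open Finset

/-- Crossing lemma: a walk from inside `T` to outside `T` crosses an edge of the boundary. -/
lemma walk_crossing {V : Type*} {G : SimpleGraph V} (T : Set V) :
    ∀ {x u : V}, G.Walk x u → x ∈ T → u ∉ T → ∃ b c, G.Adj b c ∧ b ∈ T ∧ c ∉ T := by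
  intro x u p
  induction p with
  | nil => intro hx hu; exact absurd hx hu
  | @cons x' y' z' h q ih =>
    intro hx hu
    by_cases hy : y' ∈ T
    · exact ih hy hu
    · exact ⟨x', y', h, hx, hy⟩

/-- Weighted handshake: the double sum of a symmetric weight vanishing off edges equals
twice the sum over edges. -/
lemma weighted_handshake {V : Type*} [Fintype V] [DecidableEq V]
    (G : SimpleGraph V) [DecidableRel G.Adj]
    (w : V → V → ℝ)
    (hw_zero : ∀ x y, ¬ G.Adj x y → w x y = 0)
    (wE : Sym2 V → ℝ) (hwE : ∀ u v : V, wE s(u, v) = w u v) :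
    ∑ x, ∑ y, w x y = 2 * ∑ e ∈ G.edgeFinset, wE e := by
  have h1 : ∑ x, ∑ y, w x y
      = ∑ p ∈ (univ ×ˢ univ).filter (fun p : V × V => G.Adj p.1 p.2), w p.1 p.2 := by
    rw [← Finset.sum_product']
    exact (Finset.sum_subset (filter_subset _ _) (fun p _ hp => by
      refine hw_zero _ _ ?_
      intro hadj
      exact hp (mem_filter.2 ⟨mem_product.2 ⟨mem_univ _, mem_univ _⟩, hadj⟩))).symm
  have h2 : ∑ d : G.Dart, w d.fst d.snd
      = ∑ p ∈ (univ ×ˢ univ).filter (fun p : V × V => G.Adj p.1 p.2), w p.1 p.2 := by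
    refine Finset.sum_bij' (fun d _ => (d.fst, d.snd))
      (fun p hp => SimpleGraph.Dart.mk p (mem_filter.1 hp).2) ?_ ?_ ?_ ?_ ?_
    · intro d _; exact mem_filter.2 ⟨mem_product.2 ⟨mem_univ _, mem_univ _⟩, d.adj⟩
    · intro p hp; exact mem_univ _
    · intro d _; rfl
    · intro p hp; rfl
    · intro d _; rfl
  have h3 : ∀ d : G.Dart, w d.fst d.snd = wE d.edge := by
    intro d
    rw [show d.edge = s(d.fst, d.snd) from rfl, hwE]
  have h4 : ∑ d : G.Dart, wE d.edge = ∑ e ∈ G.edgeFinset, 2 * wE e := by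
    rw [← Finset.sum_fiberwise_of_maps_to (g := SimpleGraph.Dart.edge)
      (fun d _ => SimpleGraph.mem_edgeFinset.2 d.edge_mem)]
    refine Finset.sum_congr rfl fun e he => ?_
    have hcard : (univ.filter fun d : G.Dart => d.edge = e).card = 2 :=
      G.dart_edge_fiber_card e (SimpleGraph.mem_edgeFinset.1 he)
    calc ∑ d ∈ univ.filter (fun d : G.Dart => d.edge = e), wE d.edge
        = ∑ _d ∈ univ.filter (fun d : G.Dart => d.edge = e), wE e :=
          Finset.sum_congr rfl (fun d hd => by rw [(mem_filter.1 hd).2])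
      _ = 2 * wE e := by rw [Finset.sum_const, hcard]; ring
  rw [h1, ← h2]
  simp_rw [h3]
  rw [h4, Finset.mul_sum]
open Finset

lemma spanning_bound {V : Type*} [Fintype V] [DecidableEq V]
    (G : SimpleGraph V) [DecidableRel G.Adj] (hconn : G.Connected)
    (w : V → V → ℝ)
    (hw_pos : ∀ x y, G.Adj x y → 0 < w x y)
    (τ : ℝ) (hτ : ∀ x y z, G.Adj x y → G.Adj x z → w x y ≤ τ * w x z)
    (a a₁ : V) (hadj : G.Adj a a₁) (hpend : ∀ z, G.Adj a z → z = a₁)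
    (hnorm : w a a₁ = 1)
    (wE : Sym2 V → ℝ) (hwE : ∀ u v : V, wE s(u, v) = w u v)
    (hτ1 : 1 ≤ τ) :
    ∀ n, 1 ≤ n → n ≤ G.edgeFinset.card →
      ∃ s : Finset (Sym2 V), s ⊆ G.edgeFinset ∧ s.card = n ∧ s(a, a₁) ∈ s ∧
        (∀ e ∈ s, wE e ≤ τ ^ (n - 1)) ∧ ∑ e ∈ s, wE e ≤ ∑ k ∈ Finset.range n, τ ^ k := by
  intro n
  induction n with
  | zero => omega
  | succ n ih =>
    intro _ hle
    rcases Nat.eq_zero_or_pos n with hn0 | hn1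
    · subst hn0
      refine ⟨{s(a, a₁)}, ?_, by simp, by simp, ?_, ?_⟩
      · intro e he; rw [Finset.mem_singleton] at he; subst he
        exact SimpleGraph.mem_edgeFinset.2 hadj
      · intro e he; rw [Finset.mem_singleton] at he; subst he
        simp [hwE, hnorm]
      · simp [hwE, hnorm]
    · obtain ⟨s, hsub, hcard, hmem, hmax, hsum⟩ := ih hn1 (by omega)
      -- s is a proper subset of the edge set
      have hne : s ≠ G.edgeFinset := by
        intro h; rw [h] at hcard; omega
      obtain ⟨e₀, he₀E, he₀s⟩ := Finset.exists_of_ssubset (hsub.ssubset_of_ne hne)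
      -- the set of touched vertices
      set T : Set V := {x | x = a ∨ ∃ e ∈ s, x ∈ e} with hT
      have ha₁T : a₁ ∈ T := Or.inr ⟨s(a, a₁), hmem, by simp⟩
      -- find a new edge touching T
      have key : ∃ x y, G.Adj x y ∧ s(x, y) ∉ s ∧ x ∈ T := by
        induction e₀ with
        | _ u v =>
          have huv : G.Adj u v := SimpleGraph.mem_edgeFinset.1 he₀E
          by_cases hu : u ∈ T
          · exact ⟨u, v, huv, by simpa [Sym2.eq_swap] using he₀s, hu⟩
          · obtain ⟨b, c, hbc, hbT, hcT⟩ :=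
              walk_crossing T ((hconn.preconnected a u).some) (Or.inl rfl) hu
            refine ⟨b, c, hbc, fun hmem' => hcT (Or.inr ⟨s(b, c), hmem', by simp⟩), hbT⟩
      obtain ⟨x, y, hxy, hxys, hxT⟩ := key
      -- bound the weight of the new edge by τ ^ n
      have hwxy : w x y ≤ τ ^ n := by
        rcases hxT with hxa | ⟨e', he's, hxe'⟩
        · exfalso
          subst hxa
          have := hpend y hxy
          subst this
          exact hxys hmem
        · obtain ⟨z, rfl⟩ := Sym2.mem_iff_exists.1 hxe'
          have hxz : G.Adj x z := SimpleGraph.mem_edgeFinset.1 (hsub he's)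
          have h1 : w x y ≤ τ * w x z := hτ x y z hxy hxz
          have h2 : w x z ≤ τ ^ (n - 1) := by
            have := hmax _ he's
            rwa [hwE] at this
          calc w x y ≤ τ * w x z := h1
            _ ≤ τ * τ ^ (n - 1) := by
                have hτ0 : (0:ℝ) ≤ τ := le_trans zero_le_one hτ1
                exact mul_le_mul_of_nonneg_left h2 hτ0
            _ = τ ^ n := by
                rw [← pow_succ']
                congr 1
                omega
      refine ⟨insert s(x, y) s, ?_, ?_, Finset.mem_insert_of_mem hmem, ?_, ?_⟩
      · intro e he
        rcases Finset.mem_insert.1 he with rfl | he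
        · exact SimpleGraph.mem_edgeFinset.2 hxy
        · exact hsub he
      · rw [Finset.card_insert_of_notMem hxys, hcard]
      · intro e he
        rcases Finset.mem_insert.1 he with rfl | he
        · rw [hwE]; simpa using hwxy
        · calc wE e ≤ τ ^ (n - 1) := hmax e he
            _ ≤ τ ^ n := pow_le_pow_right₀ hτ1 (by omega)
      · rw [Finset.sum_insert hxys, Finset.sum_range_succ, hwE]
        have : ∑ e ∈ s, wE e ≤ ∑ k ∈ Finset.range n, τ ^ k := hsum
        linarith
open Finset

lemma hitting_formula {V : Type*} [Fintype V] [DecidableEq V]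
    (G : SimpleGraph V) [DecidableRel G.Adj]
    (w : V → V → ℝ)
    (hw_symm : ∀ x y, w x y = w y x)
    (hw_zero : ∀ x y, ¬ G.Adj x y → w x y = 0)
    (a a₁ : V) (hadj : G.Adj a a₁) (hpend : ∀ z, G.Adj a z → z = a₁)
    (hnorm : w a a₁ = 1)
    (H : V → ℝ) (hHa : H a = 0)
    (hH : ∀ x, x ≠ a → (∑ y, w x y) * H x = (∑ y, w x y) + ∑ y, w x y * H y) :
    H a₁ = (∑ x, ∑ y, w x y) - 1 := by
  set D : V → ℝ := fun x => ∑ y, w x y with hD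
  have haw : ∀ y, y ≠ a₁ → w a y = 0 := fun y hy =>
    hw_zero a y fun h => hy (hpend y h)
  have hDa : D a = 1 := by
    show ∑ y, w a y = 1
    rw [Finset.sum_eq_single a₁ (fun y _ hy => haw y hy) (by simp)]
    exact hnorm
  have hsum : ∑ x ∈ univ.erase a, (D x * H x)
      = ∑ x ∈ univ.erase a, D x + ∑ x ∈ univ.erase a, ∑ y, w x y * H y := by
    rw [← Finset.sum_add_distrib]
    exact Finset.sum_congr rfl fun x hx => hH x (Finset.mem_erase.1 hx).1
  have hA : ∑ x ∈ univ.erase a, (D x * H x) = ∑ x, D x * H x := by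
    rw [← Finset.sum_erase_add univ _ (mem_univ a), hHa]
    ring
  have hxsum : ∀ y, ∑ x ∈ univ.erase a, w x y = D y - w a y := by
    intro y
    have h1 : ∑ x ∈ univ.erase a, w x y = (∑ x, w x y) - w a y := by
      rw [← Finset.sum_erase_add univ _ (mem_univ a)]; ring
    have h2 : ∑ x, w x y = D y := by
      show _ = ∑ z, w y z
      exact Finset.sum_congr rfl fun x _ => hw_symm x y
    rw [h1, h2]
  have hB : ∑ x ∈ univ.erase a, ∑ y, w x y * H y
      = ∑ y, D y * H y - ∑ y, w a y * H y := by
    calc ∑ x ∈ univ.erase a, ∑ y, w x y * H y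
        = ∑ y, ∑ x ∈ univ.erase a, w x y * H y := Finset.sum_comm
      _ = ∑ y, (D y - w a y) * H y :=
          Finset.sum_congr rfl fun y _ => by rw [← Finset.sum_mul, hxsum y]
      _ = ∑ y, (D y * H y - w a y * H y) :=
          Finset.sum_congr rfl fun y _ => by ring
      _ = ∑ y, D y * H y - ∑ y, w a y * H y := Finset.sum_sub_distrib _ _
  have hkey : ∑ y, w a y * H y = ∑ x ∈ univ.erase a, D x := by
    have := hsum
    rw [hA, hB] at this
    linarith
  have hLHS : ∑ y, w a y * H y = H a₁ := by
    rw [Finset.sum_eq_single a₁ (fun y _ hy => by rw [haw y hy]; ring)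
      (fun h => absurd (mem_univ a₁) h), hnorm]
    ring
  have hRHS : ∑ x ∈ univ.erase a, D x = (∑ x, ∑ y, w x y) - 1 := by
    have h1 : ∑ x ∈ univ.erase a, D x = (∑ x, D x) - D a := by
      rw [← Finset.sum_erase_add univ _ (mem_univ a)]; ring
    rw [h1, hDa]
  rw [← hLHS, hkey, hRHS]


/-- `IsWeightedHittingTime G w a H` : `H` satisfies the linear system characterizing the
expected hitting times of the absorbing vertex `a` for the random walk on `G` generated
by the edge-weight function `w` (transition probabilities `p_{xy} = w x y / ∑_z w x z`). -/
def IsWeightedHittingTime {V : Type*} [Fintype V] (G : SimpleGraph V)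
    (w : V → V → ℝ) (a : V) (H : V → ℝ) : Prop :=
  H a = 0 ∧ ∀ x, x ≠ a →
    (∑ y, w x y) * H x = (∑ y, w x y) + ∑ y, w x y * H y

/-- `P t m = 2·∑_{k=1}^{m−1} t^k + 1 = 2(t^{m−1} + ⋯ + t) + 1`. -/
noncomputable def P (t : ℝ) (m : ℕ) : ℝ := 2 * ∑ k ∈ Finset.Ico 1 m, t ^ k + 1

/-- Let a random walk on a finite connected graph `G` with `m` edges be generated by an
edge-weight function `w` of asymmetry at most `τ`, normalized so that the weight of the
edge at the pendant vertex `a` equals `1`. If `a` is pendant with unique neighbor `a₁`,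
then `H(a₁, a) ≤ P(τ, m) = 2(τ^{m−1} + ⋯ + τ) + 1`; equivalently, the total
edge-conductance satisfies `∑_{e ∈ E} w(e) ≤ τ^{m−1} + ⋯ + τ + 1`. -/
theorem pendant_hitting_le {V : Type*} [Fintype V] [DecidableEq V]
    (G : SimpleGraph V) [DecidableRel G.Adj] (hconn : G.Connected)
    (m : ℕ) (hm : m = G.edgeFinset.card)
    (w : V → V → ℝ)
    (hw_symm : ∀ x y, w x y = w y x)
    (hw_pos : ∀ x y, G.Adj x y → 0 < w x y)
    (hw_zero : ∀ x y, ¬ G.Adj x y → w x y = 0)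
    (τ : ℝ) (hτ : ∀ x y z, G.Adj x y → G.Adj x z → w x y ≤ τ * w x z)
    (a a₁ : V) (hadj : G.Adj a a₁) (hpend : ∀ z, G.Adj a z → z = a₁)
    (hnorm : w a a₁ = 1)
    (wE : Sym2 V → ℝ) (hwE : ∀ u v : V, wE s(u, v) = w u v)
    (H : V → ℝ) (hH : IsWeightedHittingTime G w a H) :
    H a₁ ≤ P τ m ∧ ∑ e ∈ G.edgeFinset, wE e ≤ ∑ k ∈ Finset.range m, τ ^ k := by
  have hτ1 : (1:ℝ) ≤ τ := by
    have := hτ a a₁ a₁ hadj hadj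
    rw [hnorm] at this
    linarith
  have hm1 : 1 ≤ G.edgeFinset.card :=
    Finset.card_pos.2 ⟨s(a, a₁), SimpleGraph.mem_edgeFinset.2 hadj⟩
  obtain ⟨s, hsub, hcard, -, -, hsum⟩ :=
    spanning_bound G hconn w hw_pos τ hτ a a₁ hadj hpend hnorm wE hwE hτ1
      G.edgeFinset.card hm1 le_rfl
  have hseq : s = G.edgeFinset :=
    Finset.eq_of_subset_of_card_le hsub (le_of_eq hcard.symm)
  subst hseq
  have hedge : ∑ e ∈ G.edgeFinset, wE e ≤ ∑ k ∈ Finset.range m, τ ^ k := by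
    rw [hm]
    exact hsum
  refine ⟨?_, hedge⟩
  have hHa₁ : H a₁ = (∑ x, ∑ y, w x y) - 1 :=
    hitting_formula G w hw_symm hw_zero a a₁ hadj hpend hnorm H hH.1 hH.2
  rw [hHa₁, weighted_handshake G w hw_zero wE hwE]
  have hsplit : ∑ k ∈ Finset.range m, τ ^ k = 1 + ∑ k ∈ Finset.Ico 1 m, τ ^ k := by
    rw [Finset.range_eq_Ico, Finset.sum_eq_sum_Ico_succ_bot (by omega : 0 < m)]
    simp
  rw [hsplit] at hedge
  unfold P
  linarith
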